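/- Any nonzero modular form for SL₂(ℤ) of weight k ≡ 2 (mod 4) has at least one negative Fourier coefficient. -/

import Mathlib

open Real Complex UpperHalfPlane MatrixGroups CongruenceSubgroup

lemma my_term_im (a : ℝ) (n : ℕ) (t : ℝ) :
    (a : ℂ) * Complex.exp (2 * π * Complex.I * n * (Complex.I * t)) =
      ((a * Real.exp (-(2 * π * n * t)) : ℝ) : ℂ) := by
  have : (2 * ↑π * Complex.I * ↑n * (Complex.I * ↑t) : ℂ) = ((-(2 * π * n * t) : ℝ) : ℂ) := by
    push_cast
    ring_nf
    rw [Complex.I_sq]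
    ring
  rw [this, ← Complex.ofReal_exp]
  push_cast
  ring

lemma my_I_zpow (k : ℤ) (hk : k % 4 = 2) : Complex.I ^ k = -1 := by
  have h : k = 4 * (k / 4) + 2 := by omega
  have h4 : Complex.I ^ (4 : ℤ) = 1 := by
    rw [show (4:ℤ) = ((4:ℕ):ℤ) from rfl, zpow_natCast]; simp [pow_succ]
  have h2 : Complex.I ^ (2 : ℤ) = -1 := by
    rw [show (2:ℤ) = ((2:ℕ):ℤ) from rfl, zpow_natCast]; simp [pow_two, Complex.I_mul_I]
  rw [h, zpow_add₀ Complex.I_ne_zero, zpow_mul, h4, one_zpow, h2, one_mul]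

theorem negative_coefficient_weight_two_mod_four (k : ℤ) (hk : k % 4 = 2)
    (f : ModularForm (Gamma 1) k) (hf0 : f ≠ 0) (a : ℕ → ℝ)
    (hf : ∀ z : ℍ, f z = ∑' n : ℕ,
      (a n : ℂ) * Complex.exp (2 * π * Complex.I * n * (z : ℂ))) :
    ∃ n : ℕ, a n < 0 := by
  by_contra hcon
  push_neg at hcon
  -- find a point where f is nonzero
  have hz : ∃ z : ℍ, f z ≠ 0 := by
    by_contra h'
    push_neg at h'
    exact hf0 (by ext z; simpa using h' z)
  obtain ⟨z₀, hz₀⟩ := hz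
  set y₀ : ℝ := z₀.im with hy₀def
  have hy₀ : 0 < y₀ := z₀.im_pos
  -- summability at z₀
  have hs : Summable (fun n : ℕ => (a n : ℂ) * Complex.exp (2 * π * Complex.I * n * (z₀ : ℂ))) := by
    by_contra hns
    rw [hf z₀, tsum_eq_zero_of_not_summable hns] at hz₀
    exact hz₀ rfl
  have hnorm : ∀ n : ℕ, ‖(a n : ℂ) * Complex.exp (2 * π * Complex.I * n * (z₀ : ℂ))‖
      = a n * Real.exp (-(2 * π * n * y₀)) := by
    intro n
    rw [norm_mul, Complex.norm_real, Complex.norm_exp,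
      Real.norm_eq_abs, _root_.abs_of_nonneg (hcon n)]
    congr 2
    simp [Complex.mul_re, Complex.mul_im, UpperHalfPlane.coe_im, hy₀def]
  have hsum : Summable (fun n : ℕ => a n * Real.exp (-(2 * π * n * y₀))) := by
    have := (summable_norm_iff.mpr hs)
    simpa only [hnorm] using this
  -- the point w = I y₀
  have hw_mem : (Complex.I * (y₀ : ℂ)).im > 0 := by simpa using hy₀
  set w : ℍ := ⟨Complex.I * (y₀ : ℂ), hw_mem⟩ with hwdef
  set g : ℝ := ∑' n : ℕ, a n * Real.exp (-(2 * π * n * y₀)) with hgdef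
  have hfw : f w = (g : ℂ) := by
    rw [hf w, hgdef, Complex.ofReal_tsum]
    congr 1
    ext n
    exact (my_term_im (a n) n y₀).symm ▸ (my_term_im (a n) n y₀)
  have hg_pos : 0 < g := by
    have h1 : ‖f z₀‖ ≤ g := by
      rw [hf z₀, hgdef]
      calc ‖∑' n : ℕ, (a n : ℂ) * Complex.exp (2 * π * Complex.I * n * (z₀ : ℂ))‖
          ≤ ∑' n : ℕ, ‖(a n : ℂ) * Complex.exp (2 * π * Complex.I * n * (z₀ : ℂ))‖ :=
            norm_tsum_le_tsum_norm (by simpa [hnorm] using summable_norm_iff.mpr hs)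
        _ = ∑' n : ℕ, a n * Real.exp (-(2 * π * n * y₀)) := by
            exact tsum_congr hnorm
    have := norm_pos_iff.mpr hz₀
    linarith
  -- modularity at S
  have hS : ModularGroup.S ∈ CongruenceSubgroup.Gamma 1 := by
    rw [CongruenceSubgroup.Gamma_one_top]; exact Subgroup.mem_top _
  have heqn : f (ModularGroup.S • w) = ((ModularGroup.S : SL(2, ℤ)) 1 0 * (w : ℂ) + (ModularGroup.S : SL(2,ℤ)) 1 1) ^ k * f w := by
    rw [SlashInvariantForm.slash_action_eqn_SL'' f hS w]
    simp [UpperHalfPlane.denom]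
  have hdenom : ((ModularGroup.S : SL(2, ℤ)) 1 0 * (w : ℂ) + (ModularGroup.S : SL(2,ℤ)) 1 1)
      = (w : ℂ) := by
    simp [ModularGroup.S]
  rw [hdenom] at heqn
  -- coe of S • w
  have hy₀ne : (y₀ : ℂ) ≠ 0 := by exact_mod_cast hy₀.ne'
  have hcoe : ((ModularGroup.S • w : ℍ) : ℂ) = Complex.I * ((y₀⁻¹ : ℝ) : ℂ) := by
    rw [UpperHalfPlane.modular_S_smul]
    show (-(w : ℂ))⁻¹ = _
    push_cast
    refine inv_eq_of_mul_eq_one_right ?_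
    show -(Complex.I * (y₀:ℂ)) * (Complex.I * ((y₀:ℂ))⁻¹) = 1
    rw [show -(Complex.I * (y₀:ℂ)) * (Complex.I * ((y₀:ℂ))⁻¹)
        = -(Complex.I * Complex.I) * ((y₀:ℂ) * ((y₀:ℂ))⁻¹) by ring,
      Complex.I_mul_I, mul_inv_cancel₀ hy₀ne]
    norm_num
  -- value at S • w as a nonnegative real
  set g' : ℝ := ∑' n : ℕ, a n * Real.exp (-(2 * π * n * y₀⁻¹)) with hg'def
  have hfsw : f (ModularGroup.S • w) = (g' : ℂ) := by
    rw [hf (ModularGroup.S • w), hcoe, hg'def, Complex.ofReal_tsum]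
    exact tsum_congr fun n => my_term_im (a n) n y₀⁻¹
  have hg'_nonneg : 0 ≤ g' :=
    tsum_nonneg fun n => mul_nonneg (hcon n) (Real.exp_nonneg _)
  -- compute the factor
  have hwpow : ((w : ℂ)) ^ k = -((y₀ ^ k : ℝ) : ℂ) := by
    show (Complex.I * (y₀ : ℂ)) ^ k = _
    rw [mul_zpow, my_I_zpow k hk, Complex.ofReal_zpow]
    ring
  rw [hfsw, hfw, hwpow] at heqn
  have hyk : 0 < y₀ ^ k := zpow_pos hy₀ k
  have : g' = -(y₀ ^ k * g) := by
    have := heqn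
    rw [show (-((y₀ ^ k : ℝ) : ℂ)) * (g : ℂ) = ((-(y₀ ^ k * g) : ℝ) : ℂ) by push_cast; ring] at this
    exact_mod_cast this
  nlinarith
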